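/- For every α ≥ 0, (1/n^(α+1)) ∑_{k=1}^n k^(α-1) (log k) φ(k) − 6((1+α) log n − 1)/(π²(1+α)²) converges to 0 as n → ∞. -/

import Mathlib

open Filter Finset Real ArithmeticFunction
open scoped ArithmeticFunction.Moebius

lemma moeb_abs_le (d : ℕ) : |(μ d : ℝ) / d ^ 2| ≤ 1 / (d:ℝ) ^ 2 := by
  rw [abs_div, abs_of_nonneg (by positivity : (0:ℝ) ≤ (d:ℝ)^2)]
  have : |(μ d : ℝ)| ≤ 1 := by exact_mod_cast (abs_moebius_le_one (n := d))
  gcongr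

lemma moeb_summable : Summable (fun d : ℕ => |(μ d : ℝ) / d ^ 2|) := by
  have h1 : Summable (fun d : ℕ => 1 / (d : ℝ) ^ 2) :=
    Real.summable_one_div_nat_pow.mpr one_lt_two
  exact Summable.of_nonneg_of_le (fun d => abs_nonneg _) moeb_abs_le h1

lemma moeb_hasSum : HasSum (fun d : ℕ => (μ d : ℝ) / d ^ 2) (6 / π ^ 2) := by
  have hsumm : Summable (fun d : ℕ => (μ d : ℝ) / d ^ 2) := moeb_summable.of_abs
  set S : ℝ := ∑' d : ℕ, (μ d : ℝ) / d ^ 2 with hS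
  have hre : HasSum (fun d : ℕ => (μ d : ℝ) / d ^ 2) S := hsumm.hasSum
  have hC : HasSum (fun d : ℕ => (((μ d : ℝ) / d ^ 2 : ℝ) : ℂ)) ((S : ℝ) : ℂ) :=
    hre.mapL Complex.ofRealCLM
  have h2 : (1:ℝ) < (2:ℂ).re := by norm_num
  have hLsumm : LSeriesSummable (fun n => (μ n : ℂ)) 2 :=
    ArithmeticFunction.LSeriesSummable_moebius_iff.mpr h2
  have hL : HasSum (fun n => LSeries.term (fun n => (μ n : ℂ)) 2 n)
      (LSeries (fun n => (μ n : ℂ)) 2) := hLsumm.hasSum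
  have hterm : ∀ n : ℕ, LSeries.term (fun n => (μ n : ℂ)) 2 n
      = (((μ n : ℝ) / n ^ 2 : ℝ) : ℂ) := by
    intro n
    rcases Nat.eq_zero_or_pos n with h | h
    · simp [h, LSeries.term]
    · rw [LSeries.term_of_ne_zero h.ne']
      push_cast
      norm_num [Complex.cpow_ofNat]
  have hL' : HasSum (fun n : ℕ => (((μ n : ℝ) / n ^ 2 : ℝ) : ℂ))
      (LSeries (fun n => (μ n : ℂ)) 2) := by
    simpa only [hterm] using hL
  have hSC : ((S : ℝ) : ℂ) = LSeries (fun n => (μ n : ℂ)) 2 := hC.unique hL'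
  have hzval : riemannZeta 2 = (π : ℂ) ^ 2 / 6 := riemannZeta_two
  have hmul := LSeries_zeta_mul_Lseries_moebius h2
  rw [LSeries_zeta_eq_riemannZeta h2, hzval] at hmul
  have hpi : (π : ℂ) ≠ 0 := by exact_mod_cast Real.pi_ne_zero
  have : ((S : ℝ) : ℂ) = ((6 / π ^ 2 : ℝ) : ℂ) := by
    rw [hSC]
    push_cast
    field_simp at hmul ⊢
    linear_combination hmul
  have hfin : S = 6 / π ^ 2 := by exact_mod_cast this
  rwa [hfin] at hre

lemma icc_eq_ioc (m : ℕ) : Finset.Icc 1 m = Finset.Ioc 0 m := Finset.Icc_add_one_left_eq_Ioc 0 m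

lemma tail_sq {n : ℕ} (hn : 1 ≤ n) : ∀ m, n ≤ m →
    ∑ d ∈ Ioc n m, 1 / (d:ℝ) ^ 2 ≤ 1 / (n:ℝ) - 1 / (m:ℝ) := by
  intro m hm
  induction m, hm using Nat.le_induction with
  | base => simp
  | succ m hm ih =>
    rw [Finset.sum_Ioc_succ_top (by omega)]
    have hm1 : (1:ℝ) ≤ (m:ℝ) := by exact_mod_cast hn.trans hm
    have h1 : (1:ℝ) / ((m+1:ℕ):ℝ) ^ 2 ≤ 1 / (m:ℝ) - 1 / ((m+1:ℕ):ℝ) := by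
      push_cast
      have e1 : 1 / (m:ℝ) - 1 / ((m:ℝ)+1) = 1 / ((m:ℝ) * ((m:ℝ)+1)) := by
        field_simp
        ring
      rw [e1]
      apply one_div_le_one_div_of_le (by positivity)
      nlinarith
    push_cast at *
    linarith

lemma icc_sum_eq_range (f : ℕ → ℝ) (h0 : f 0 = 0) (m : ℕ) :
    ∑ d ∈ Finset.range (m+1), f d = ∑ d ∈ Icc 1 m, f d := by
  rw [Finset.range_eq_Ico, Finset.sum_eq_sum_Ico_succ_bot (by omega), h0, zero_add,
    ← Finset.Ico_add_one_right_eq_Icc]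

lemma partial_err {n : ℕ} (hn : 1 ≤ n) :
    |∑ d ∈ Icc 1 n, (μ d : ℝ) / d ^ 2 - 6 / π ^ 2| ≤ 1 / (n:ℝ) := by
  have hten : Tendsto (fun m => ∑ d ∈ Icc 1 m, (μ d : ℝ) / d ^ 2) atTop
      (nhds (6 / π ^ 2)) := by
    have h := moeb_hasSum.tendsto_sum_nat
    have heq : ∀ m : ℕ, ∑ d ∈ Icc 1 m, (μ d : ℝ) / d ^ 2
        = ∑ d ∈ Finset.range (m+1), (μ d : ℝ) / d ^ 2 :=
      fun m => (icc_sum_eq_range _ (by simp) m).symm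
    simp only [heq]
    exact h.comp (tendsto_add_atTop_nat 1)
  have hkey : Tendsto (fun m => |∑ d ∈ Icc 1 n, (μ d : ℝ) / d ^ 2
      - ∑ d ∈ Icc 1 m, (μ d : ℝ) / d ^ 2|) atTop
      (nhds (|∑ d ∈ Icc 1 n, (μ d : ℝ) / d ^ 2 - 6 / π ^ 2|)) :=
    ((tendsto_const_nhds.sub hten).abs)
  apply le_of_tendsto hkey
  filter_upwards [eventually_ge_atTop n] with m hm
  have hsplit : ∑ d ∈ Icc 1 m, (μ d : ℝ) / d ^ 2
      = ∑ d ∈ Icc 1 n, (μ d : ℝ) / d ^ 2 + ∑ d ∈ Ioc n m, (μ d : ℝ) / d ^ 2 := by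
    rw [icc_eq_ioc, icc_eq_ioc, Finset.sum_Ioc_consecutive _ (Nat.zero_le n) hm]
  rw [hsplit, sub_add_eq_sub_sub, sub_self, zero_sub, abs_neg]
  calc |∑ d ∈ Ioc n m, (μ d : ℝ) / d ^ 2| ≤ ∑ d ∈ Ioc n m, 1 / (d:ℝ) ^ 2 :=
        (Finset.abs_sum_le_sum_abs _ _).trans (Finset.sum_le_sum fun d _ => moeb_abs_le d)
    _ ≤ 1 / (n:ℝ) - 1 / (m:ℝ) := tail_sq hn m hm
    _ ≤ 1 / (n:ℝ) := by
        have hm0 : (0:ℝ) ≤ 1 / (m:ℝ) := by positivity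
        linarith

lemma tot_div {k : ℕ} (hk : 1 ≤ k) :
    (Nat.totient k : ℝ) / k = ∑ d ∈ k.divisors, (μ d : ℝ) / d := by
  have hinv := (sum_eq_iff_sum_mul_moebius_eq
      (R := ℝ) (f := fun i => (Nat.totient i : ℝ)) (g := fun i => (i : ℝ))).mp
    (fun n hn => by exact_mod_cast congrArg (Nat.cast (R := ℝ)) (Nat.sum_totient n))
  have h2 := hinv k hk
  rw [← Nat.sum_divisorsAntidiagonal (f := fun d e => (μ d : ℝ) / d)]
  rw [← h2]
  rw [Finset.sum_div]
  apply Finset.sum_congr rfl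
  intro x hx
  obtain ⟨hxe, hk0⟩ := Nat.mem_divisorsAntidiagonal.mp hx
  have hx1 : x.1 ≠ 0 := by rintro h; rw [h] at hxe; simp at hxe; omega
  have hx2 : x.2 ≠ 0 := by rintro h; rw [h] at hxe; simp at hxe; omega
  rw [← hxe]
  push_cast
  field_simp

lemma divisors_eq_filter {k n : ℕ} (hk : 1 ≤ k) (hkn : k ≤ n) :
    k.divisors = {d ∈ Icc 1 n | d ∣ k} := by
  ext d
  simp only [Nat.mem_divisors, Finset.mem_filter, Finset.mem_Icc]
  constructor
  · rintro ⟨hd, h0⟩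
    exact ⟨⟨Nat.pos_of_dvd_of_pos hd (by omega), (Nat.le_of_dvd (by omega) hd).trans hkn⟩, hd⟩
  · rintro ⟨_, hd⟩
    exact ⟨hd, by omega⟩

lemma swap_sum (F : ℕ → ℝ) (n : ℕ) :
    ∑ k ∈ Icc 1 n, ∑ d ∈ k.divisors, F d
      = ∑ d ∈ Icc 1 n, F d * ((n / d : ℕ) : ℝ) := by
  have h1 : ∀ k ∈ Icc 1 n, ∑ d ∈ k.divisors, F d
      = ∑ d ∈ Icc 1 n, if d ∣ k then F d else 0 := by
    intro k hk
    rw [Finset.mem_Icc] at hk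
    rw [divisors_eq_filter hk.1 hk.2, Finset.sum_filter]
  rw [Finset.sum_congr rfl h1, Finset.sum_comm]
  apply Finset.sum_congr rfl
  intro d _
  rw [← Finset.sum_filter, Finset.sum_const, ← Nat.Ioc_filter_dvd_card_eq_div n d,
    icc_eq_ioc, nsmul_eq_mul, mul_comm]

lemma A_err {n : ℕ} (hn : 1 ≤ n) :
    |∑ k ∈ Icc 1 n, (Nat.totient k : ℝ) / k - (6 / π ^ 2) * n| ≤ Real.log n + 2 := by
  have hA : ∑ k ∈ Icc 1 n, (Nat.totient k : ℝ) / k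
      = ∑ d ∈ Icc 1 n, ((μ d : ℝ) / d) * ((n / d : ℕ) : ℝ) := by
    rw [← swap_sum]
    exact Finset.sum_congr rfl fun k hk => tot_div (Finset.mem_Icc.mp hk).1
  have hcn : (6 / π ^ 2) * (n:ℝ) = (n:ℝ) * (∑ d ∈ Icc 1 n, (μ d : ℝ) / d ^ 2)
      - (n:ℝ) * (∑ d ∈ Icc 1 n, (μ d : ℝ) / d ^ 2 - 6 / π ^ 2) := by ring
  rw [hA, hcn, Finset.mul_sum]
  have key : |∑ d ∈ Icc 1 n, (((μ d : ℝ) / d) * ((n / d : ℕ) : ℝ)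
      - (n:ℝ) * ((μ d : ℝ) / d ^ 2))| ≤ Real.log n + 1 := by
    calc |∑ d ∈ Icc 1 n, (((μ d : ℝ) / d) * ((n / d : ℕ) : ℝ)
          - (n:ℝ) * ((μ d : ℝ) / d ^ 2))|
        ≤ ∑ d ∈ Icc 1 n, |((μ d : ℝ) / d) * ((n / d : ℕ) : ℝ)
          - (n:ℝ) * ((μ d : ℝ) / d ^ 2)| := Finset.abs_sum_le_sum_abs _ _
      _ ≤ ∑ d ∈ Icc 1 n, 1 / (d:ℝ) := by
          apply Finset.sum_le_sum
          intro d hd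
          have hd1 : 1 ≤ d := (Finset.mem_Icc.mp hd).1
          have hdR : (1:ℝ) ≤ (d:ℝ) := by exact_mod_cast hd1
          have hmod : ((n % d : ℕ) : ℝ) < d := by
            exact_mod_cast Nat.mod_lt n (by omega)
          have hdiv : (n:ℝ) = (d:ℝ) * ((n / d : ℕ) : ℝ) + ((n % d : ℕ) : ℝ) := by
            exact_mod_cast (Nat.div_add_mod n d).symm
          have habs : |(μ d : ℝ)| ≤ 1 := by
            exact_mod_cast (abs_moebius_le_one (n := d))
          have heq : ((μ d : ℝ) / d) * ((n / d : ℕ) : ℝ) - (n:ℝ) * ((μ d : ℝ) / d ^ 2)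
              = -(μ d : ℝ) * (((n % d : ℕ) : ℝ) / d ^ 2) := by
            rw [hdiv]; field_simp; ring
          rw [heq, abs_mul, abs_neg]
          have h2 : |((n % d : ℕ) : ℝ) / (d:ℝ) ^ 2| ≤ 1 / (d:ℝ) := by
            rw [abs_of_nonneg (by positivity)]
            rw [div_le_div_iff₀ (by positivity) (by positivity)]
            calc ((n % d : ℕ) : ℝ) * (d:ℝ) ≤ (d:ℝ) * (d:ℝ) := by nlinarith [Nat.cast_nonneg (α := ℝ) (n % d)]
              _ = 1 * (d:ℝ)^2 := by ring
          calc |(μ d : ℝ)| * |((n % d : ℕ) : ℝ) / (d:ℝ) ^ 2|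
              ≤ 1 * (1 / (d:ℝ)) := by
                apply mul_le_mul habs h2 (abs_nonneg _) zero_le_one
            _ = 1 / (d:ℝ) := one_mul _
      _ = (harmonic n : ℝ) := by
          rw [harmonic]
          push_cast
          rw [← Finset.Ico_add_one_right_eq_Icc, Finset.sum_Ico_eq_sum_range]
          simp [add_comm, one_div]
      _ ≤ 1 + Real.log n := harmonic_le_one_add_log n
      _ = Real.log n + 1 := by ring
  have hsec : |(n:ℝ) * (∑ d ∈ Icc 1 n, (μ d : ℝ) / d ^ 2 - 6 / π ^ 2)| ≤ 1 := by
    rw [abs_mul, abs_of_nonneg (Nat.cast_nonneg n)]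
    calc (n:ℝ) * |∑ d ∈ Icc 1 n, (μ d : ℝ) / d ^ 2 - 6 / π ^ 2|
        ≤ (n:ℝ) * (1 / (n:ℝ)) := by
          apply mul_le_mul_of_nonneg_left (partial_err hn) (Nat.cast_nonneg n)
      _ = 1 := by
          field_simp
  calc |∑ d ∈ Icc 1 n, ((μ d : ℝ) / d) * ((n / d : ℕ) : ℝ)
        - ((∑ d ∈ Icc 1 n, (n:ℝ) * ((μ d : ℝ) / d ^ 2))
          - (n:ℝ) * (∑ d ∈ Icc 1 n, (μ d : ℝ) / d ^ 2 - 6 / π ^ 2))|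
      = |(∑ d ∈ Icc 1 n, (((μ d : ℝ) / d) * ((n / d : ℕ) : ℝ)
          - (n:ℝ) * ((μ d : ℝ) / d ^ 2)))
        + (n:ℝ) * (∑ d ∈ Icc 1 n, (μ d : ℝ) / d ^ 2 - 6 / π ^ 2)| := by
        congr 1
        rw [Finset.sum_sub_distrib]
        ring
    _ ≤ _ + _ := abs_add_le _ _
    _ ≤ (Real.log n + 1) + 1 := add_le_add key hsec
    _ = Real.log n + 2 := by ring

lemma abel_id (f a : ℕ → ℝ) (c : ℝ) (hf0 : f 0 = 0) (n : ℕ) :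
    ∑ k ∈ range (n+1), f k * a k - c * ∑ k ∈ range (n+1), f k
      = f n * ((∑ k ∈ range (n+1), a k) - c * n)
        - ∑ i ∈ range n, (f (i+1) - f i) * ((∑ k ∈ range (i+1), a k) - c * i) := by
  induction n with
  | zero => simp [hf0]
  | succ n ih =>
    rw [Finset.sum_range_succ (f := fun k => f k * a k),
      Finset.sum_range_succ (f := fun k => f k),
      Finset.sum_range_succ (f := fun i => (f (i+1) - f i) * ((∑ k ∈ range (i+1), a k) - c * i)),
      Finset.sum_range_succ (f := fun k => a k)]
    push_cast
    linarith [ih]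

lemma F_mono (α : ℝ) (hα : 0 ≤ α) (b : ℝ) :
    MonotoneOn (fun x : ℝ => x ^ α * Real.log x) (Set.Icc 1 b) := by
  intro x hx y hy hxy
  have hx1 : (1:ℝ) ≤ x := hx.1
  have hy1 : (1:ℝ) ≤ y := hy.1
  have h1 : x ^ α ≤ y ^ α := Real.rpow_le_rpow (by linarith) hxy hα
  have h2 : Real.log x ≤ Real.log y := Real.log_le_log (by linarith) hxy
  have h3 : (0:ℝ) ≤ Real.log x := Real.log_nonneg hx1
  have h4 : (0:ℝ) ≤ y ^ α := Real.rpow_nonneg (by linarith) α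
  calc x ^ α * Real.log x ≤ y ^ α * Real.log x := mul_le_mul_of_nonneg_right h1 h3
    _ ≤ y ^ α * Real.log y := mul_le_mul_of_nonneg_left h2 h4

lemma integral_val (α : ℝ) (hα : 0 ≤ α) (x : ℝ) (hx : 1 ≤ x) :
    ∫ t in (1:ℝ)..x, t ^ α * Real.log t
      = x ^ (α+1) * Real.log x / (α+1) - x ^ (α+1) / (α+1)^2 + 1 / (α+1)^2 := by
  have ha1 : α + 1 ≠ 0 := by linarith
  have hderiv : ∀ t ∈ Set.uIcc (1:ℝ) x, HasDerivAt
      (fun t : ℝ => t ^ (α+1) * Real.log t / (α+1) - t ^ (α+1) / (α+1)^2)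
      (t ^ α * Real.log t) t := by
    intro t ht
    rw [Set.uIcc_of_le hx] at ht
    have ht1 : (1:ℝ) ≤ t := ht.1
    have ht0 : (0:ℝ) < t := by linarith
    have h1 : HasDerivAt (fun t : ℝ => t ^ (α+1)) ((α+1) * t ^ α) t := by
      have := Real.hasDerivAt_rpow_const (x := t) (p := α+1) (Or.inl ht0.ne')
      simpa [add_sub_cancel_right] using this
    have h2 : HasDerivAt Real.log t⁻¹ t := Real.hasDerivAt_log ht0.ne'
    have h3 : HasDerivAt (fun t : ℝ => t ^ (α+1) * Real.log t)
        ((α+1) * t ^ α * Real.log t + t ^ (α+1) * t⁻¹) t := h1.mul h2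
    have h4 : t ^ (α+1) * t⁻¹ = t ^ α := by
      rw [← Real.rpow_neg_one t, ← Real.rpow_add ht0]
      norm_num
    rw [h4] at h3
    have h5 := (h3.div_const (α+1)).sub (h1.div_const ((α+1)^2))
    have e : ((α+1) * t ^ α * Real.log t + t ^ α) / (α+1) - (α+1) * t ^ α / (α+1)^2
        = t ^ α * Real.log t := by
      field_simp
      ring
    rw [e] at h5
    exact h5
  have hcont : IntervalIntegrable (fun t : ℝ => t ^ α * Real.log t)
      MeasureTheory.volume 1 x := by
    apply ContinuousOn.intervalIntegrable
    apply ContinuousOn.mul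
    · apply ContinuousOn.rpow_const continuousOn_id
      intro t ht
      rw [Set.uIcc_of_le hx] at ht
      exact Or.inl (by simp; linarith [ht.1])
    · apply ContinuousOn.log continuousOn_id
      intro t ht
      rw [Set.uIcc_of_le hx] at ht
      simp; linarith [ht.1]
  rw [intervalIntegral.integral_eq_sub_of_hasDerivAt hderiv hcont]
  rw [Real.one_rpow, Real.log_one]
  ring

lemma sum_integral_cmp (α : ℝ) (hα : 0 ≤ α) {n : ℕ} (hn : 1 ≤ n) :
    |∑ k ∈ range (n+1), (k:ℝ) ^ α * Real.log k
      - ∫ t in (1:ℝ)..(n:ℝ), t ^ α * Real.log t| ≤ (n:ℝ) ^ α * Real.log n := by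
  set F : ℝ → ℝ := fun x => x ^ α * Real.log x with hF
  set f : ℕ → ℝ := fun k => F (k:ℝ) with hf
  have hf0 : f 0 = 0 := by simp [hf, hF]
  have hf1 : f 1 = 0 := by simp [hf, hF]
  have hmono : MonotoneOn F (Set.Icc ((1:ℕ):ℝ) ((n:ℕ):ℝ)) := by
    have := F_mono α hα (n:ℝ)
    simpa using this
  have claim1 : ∑ k ∈ range (n+1), f k = (∑ x ∈ Ico 1 n, f x) + f n := by
    rw [Finset.range_eq_Ico, Finset.sum_eq_sum_Ico_succ_bot (by omega), hf0, zero_add,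
      Finset.sum_Ico_succ_top hn]
  have claim2 : ∑ x ∈ Ico 1 n, F ((x + 1 : ℕ) : ℝ) = (∑ x ∈ Ico 1 n, f x) + f n := by
    have e1 : ∑ x ∈ Ico 1 n, F ((x + 1 : ℕ) : ℝ) = ∑ x ∈ Ico 2 (n+1), f x := by
      rw [Finset.sum_Ico_eq_sum_range, Finset.sum_Ico_eq_sum_range]
      apply Finset.sum_congr (by congr 1 <;> omega) fun i _ => by
        congr 1
        push_cast
        ring
    have e2 : ∑ x ∈ Ico 1 (n+1), f x = f 1 + ∑ x ∈ Ico 2 (n+1), f x :=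
      Finset.sum_eq_sum_Ico_succ_bot (by omega) f
    have e3 : ∑ x ∈ Ico 1 (n+1), f x = ∑ x ∈ Ico 1 n, f x + f n :=
      Finset.sum_Ico_succ_top hn f
    rw [e1]
    linarith
  have hle1 : ∑ x ∈ Ico 1 n, f x ≤ ∫ t in ((1:ℕ):ℝ)..((n:ℕ):ℝ), F t :=
    MonotoneOn.sum_le_integral_Ico hn hmono
  have hle2 : (∫ t in ((1:ℕ):ℝ)..((n:ℕ):ℝ), F t) ≤ ∑ x ∈ Ico 1 n, F ((x + 1 : ℕ) : ℝ) :=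
    MonotoneOn.integral_le_sum_Ico hn hmono
  have hfn : 0 ≤ f n := by
    apply mul_nonneg (Real.rpow_nonneg (Nat.cast_nonneg n) α)
    apply Real.log_natCast_nonneg
  rw [claim2, claim1] at *
  rw [abs_le]
  push_cast at hle1 hle2
  have hfneq : f n = (n:ℝ) ^ α * Real.log n := rfl
  have hint : (∫ t in (1:ℝ)..((n:ℕ):ℝ), F t)
      = intervalIntegral F 1 (n:ℝ) MeasureTheory.volume := rfl
  rw [hint] at hle1 hle2
  constructor
  · linarith
  · linarith

theorem stmt_11 (α : ℝ) (hα : 0 ≤ α) :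
    Filter.Tendsto
      (fun n : ℕ => (1 / (n : ℝ) ^ (α + 1)) *
        (∑ k ∈ Finset.Icc 1 n, (k : ℝ) ^ (α - 1) * Real.log k * Nat.totient k)
        - 6 * ((1 + α) * Real.log n - 1) / (Real.pi ^ 2 * (1 + α) ^ 2))
      Filter.atTop (nhds 0) := by
  set c : ℝ := 6 / π ^ 2 with hc
  have hπ : π ≠ 0 := Real.pi_ne_zero
  have hπ3 : 3 < π := Real.pi_gt_three
  have hc0 : 0 < c := by rw [hc]; positivity
  have hc1 : c ≤ 1 := by
    rw [hc, div_le_one (by positivity)]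
    nlinarith
  have hα1 : (0:ℝ) < α + 1 := by linarith
  have hα1' : (1:ℝ) ≤ (α+1)^2 := by nlinarith
  set f : ℕ → ℝ := fun k => (k:ℝ) ^ α * Real.log k with hfdef
  set a : ℕ → ℝ := fun k => (Nat.totient k : ℝ) / k with hadef
  have hf0 : f 0 = 0 := by simp [hfdef]
  have ha0 : a 0 = 0 := by simp [hadef]
  have hfmono : ∀ i : ℕ, f i ≤ f (i+1) := by
    intro i
    rcases Nat.eq_zero_or_pos i with h | h
    · subst h; simp [hfdef]
    · have := F_mono α hα ((i:ℝ)+1)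
      have h1 : (i:ℝ) ∈ Set.Icc (1:ℝ) ((i:ℝ)+1) := by
        constructor <;> [exact_mod_cast h; linarith]
      have h2 : ((i:ℝ)+1) ∈ Set.Icc (1:ℝ) ((i:ℝ)+1) := by
        constructor <;> [push_cast; skip] <;> [linarith [h1.1]; linarith]
      have := this h1 h2 (by linarith)
      simpa [hfdef] using this
  have hfnonneg : ∀ i : ℕ, 0 ≤ f i := by
    intro i
    exact mul_nonneg (Real.rpow_nonneg (Nat.cast_nonneg i) α) (Real.log_natCast_nonneg i)
  -- the bound function
  have hg : Tendsto (fun n : ℕ => (2 * Real.log n ^ 2 + 5 * Real.log n + 1) / n)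
      atTop (nhds 0) := by
    have hnat : Tendsto (fun n : ℕ => (n:ℝ)) atTop atTop := tendsto_natCast_atTop_atTop
    have h2 : Tendsto (fun x : ℝ => Real.log x ^ 2 / (1 * x + 0)) atTop (nhds 0) :=
      Real.tendsto_pow_log_div_mul_add_atTop 1 0 2 one_ne_zero
    have h1 : Tendsto (fun x : ℝ => Real.log x ^ 1 / (1 * x + 0)) atTop (nhds 0) :=
      Real.tendsto_pow_log_div_mul_add_atTop 1 0 1 one_ne_zero
    have h0 : Tendsto (fun x : ℝ => Real.log x ^ 0 / (1 * x + 0)) atTop (nhds 0) :=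
      Real.tendsto_pow_log_div_mul_add_atTop 1 0 0 one_ne_zero
    simp only [one_mul, add_zero, pow_one, pow_zero] at h2 h1 h0
    have := ((h2.const_mul 2).add ((h1.const_mul 5).add h0)).comp hnat
    simp only [mul_zero, add_zero, zero_add] at this
    apply this.congr
    intro n
    simp only [Function.comp_apply]
    field_simp
    ring
  apply squeeze_zero_norm' _ hg
  filter_upwards [eventually_ge_atTop 1] with n hn
  have hN1 : (1:ℝ) ≤ (n:ℝ) := by exact_mod_cast hn
  have hN0 : (0:ℝ) < (n:ℝ) := by linarith
  have hNp : (0:ℝ) < (n:ℝ) ^ (α+1) := Real.rpow_pos_of_pos hN0 _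
  have hNa : (0:ℝ) < (n:ℝ) ^ α := Real.rpow_pos_of_pos hN0 _
  have hNsplit : (n:ℝ) ^ (α+1) = (n:ℝ) ^ α * n := Real.rpow_add_one hN0.ne' α
  have hNge : (n:ℝ) ≤ (n:ℝ) ^ (α+1) := by
    calc (n:ℝ) = (n:ℝ) ^ (1:ℝ) := (Real.rpow_one _).symm
      _ ≤ (n:ℝ) ^ (α+1) := Real.rpow_le_rpow_of_exponent_le hN1 (by linarith)
  have hlogN : 0 ≤ Real.log n := Real.log_nonneg hN1
  -- rewrite the statement sum
  have hsum_eq : ∑ k ∈ Finset.Icc 1 n, (k : ℝ) ^ (α - 1) * Real.log k * Nat.totient k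
      = ∑ k ∈ range (n+1), f k * a k := by
    rw [icc_sum_eq_range (fun k => f k * a k) (by simp [hf0])]
    apply Finset.sum_congr rfl
    intro k hk
    have hk1 : 1 ≤ k := (Finset.mem_Icc.mp hk).1
    have hkR : (1:ℝ) ≤ (k:ℝ) := by exact_mod_cast hk1
    have hk0 : (0:ℝ) < (k:ℝ) := by linarith
    have : (k:ℝ) ^ (α - 1) = (k:ℝ) ^ α / (k:ℝ) := by
      rw [Real.rpow_sub hk0, Real.rpow_one]
    rw [this, hfdef, hadef]
    field_simp
  -- error bound for partial sums of a
  have hE : ∀ m : ℕ, m ≤ n → |(∑ k ∈ range (m+1), a k) - c * m| ≤ Real.log n + 2 := by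
    intro m hm
    rcases Nat.eq_zero_or_pos m with h | h
    · subst h
      simp [ha0]
      linarith
    · rw [icc_sum_eq_range a ha0 m]
      have := A_err (n := m) h
      have hlog : Real.log m ≤ Real.log n :=
        Real.log_le_log (by exact_mod_cast h) (by exact_mod_cast hm)
      calc |(∑ k ∈ Icc 1 m, a k) - c * m| ≤ Real.log m + 2 := this
        _ ≤ Real.log n + 2 := by linarith
  -- Abel bound
  have habel := abel_id f a c hf0 n
  have hR1 : |∑ k ∈ range (n+1), f k * a k - c * ∑ k ∈ range (n+1), f k|
      ≤ 2 * (Real.log n + 2) * ((n:ℝ) ^ α * Real.log n) := by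
    rw [habel]
    have ht1 : |f n * ((∑ k ∈ range (n+1), a k) - c * n)| ≤ (Real.log n + 2) * f n := by
      rw [abs_mul, abs_of_nonneg (hfnonneg n), mul_comm]
      exact mul_le_mul_of_nonneg_right (hE n le_rfl) (hfnonneg n)
    have ht2 : |∑ i ∈ range n, (f (i+1) - f i) * ((∑ k ∈ range (i+1), a k) - c * i)|
        ≤ (Real.log n + 2) * f n := by
      calc |∑ i ∈ range n, (f (i+1) - f i) * ((∑ k ∈ range (i+1), a k) - c * i)|
          ≤ ∑ i ∈ range n, |(f (i+1) - f i) * ((∑ k ∈ range (i+1), a k) - c * i)| :=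
            Finset.abs_sum_le_sum_abs _ _
        _ ≤ ∑ i ∈ range n, (f (i+1) - f i) * (Real.log n + 2) := by
            apply Finset.sum_le_sum
            intro i hi
            rw [abs_mul, abs_of_nonneg (by linarith [hfmono i])]
            apply mul_le_mul_of_nonneg_left _ (by linarith [hfmono i])
            exact hE i (Nat.le_of_lt (Finset.mem_range.mp hi))
        _ = (f n - f 0) * (Real.log n + 2) := by
            rw [← Finset.sum_mul, Finset.sum_range_sub (f := f)]
        _ = (Real.log n + 2) * f n := by rw [hf0]; ring
    have hfn_eq : f n = (n:ℝ) ^ α * Real.log n := rfl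
    calc |f n * ((∑ k ∈ range (n+1), a k) - c * n)
          - ∑ i ∈ range n, (f (i+1) - f i) * ((∑ k ∈ range (i+1), a k) - c * i)|
        ≤ _ + _ := abs_sub _ _
      _ ≤ (Real.log n + 2) * f n + (Real.log n + 2) * f n := add_le_add ht1 ht2
      _ = 2 * (Real.log n + 2) * ((n:ℝ) ^ α * Real.log n) := by rw [hfn_eq]; ring
  -- integral comparison
  have hR2 := sum_integral_cmp α hα hn
  have hI := integral_val α hα (n:ℝ) hN1
  -- put together
  set Sfa := ∑ k ∈ range (n+1), f k * a k with hSfa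
  set Sf := ∑ k ∈ range (n+1), f k with hSf
  set X : ℝ := (Sfa - c * Sf) + c * (Sf - ∫ t in (1:ℝ)..(n:ℝ), t ^ α * Real.log t) with hX
  have hXbound : |X| ≤ (2 * (Real.log n + 2) * Real.log n + Real.log n) * (n:ℝ) ^ α := by
    calc |X| ≤ |Sfa - c * Sf| + |c * (Sf - ∫ t in (1:ℝ)..(n:ℝ), t ^ α * Real.log t)| :=
          abs_add_le _ _
      _ ≤ 2 * (Real.log n + 2) * ((n:ℝ) ^ α * Real.log n)
          + 1 * ((n:ℝ) ^ α * Real.log n) := by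
          apply add_le_add hR1
          rw [abs_mul, abs_of_nonneg hc0.le]
          apply mul_le_mul hc1 hR2 (abs_nonneg _) zero_le_one
      _ = (2 * (Real.log n + 2) * Real.log n + Real.log n) * (n:ℝ) ^ α := by ring
  have hmain : (1 / (n : ℝ) ^ (α + 1)) * Sfa
      - 6 * ((1 + α) * Real.log n - 1) / (Real.pi ^ 2 * (1 + α) ^ 2)
      = X / (n:ℝ) ^ (α+1) + c / ((α+1)^2 * (n:ℝ) ^ (α+1)) := by
    have hSfa_eq : Sfa = c * ((n:ℝ) ^ (α+1) * Real.log n / (α+1)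
        - (n:ℝ) ^ (α+1) / (α+1)^2 + 1 / (α+1)^2) + X := by
      rw [hX, hI]; ring
    rw [hSfa_eq, hc]
    field_simp
    ring
  clear_value Sfa Sf X
  rw [Real.norm_eq_abs, hsum_eq, hmain]
  clear hX hSfa hSf habel hR2 hsum_eq hE hmain
  have hb1 : |X / (n:ℝ) ^ (α+1)| ≤ (2 * (Real.log n + 2) * Real.log n + Real.log n) / n := by
    rw [abs_div, abs_of_nonneg hNp.le, hNsplit]
    rw [div_le_div_iff₀ (by positivity) hN0]
    calc |X| * (n:ℝ) ≤ ((2 * (Real.log n + 2) * Real.log n + Real.log n) * (n:ℝ) ^ α) * n := by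
          apply mul_le_mul_of_nonneg_right hXbound hN0.le
      _ = (2 * (Real.log n + 2) * Real.log n + Real.log n) * ((n:ℝ) ^ α * n) := by ring
  have hb2 : c / ((α+1)^2 * (n:ℝ) ^ (α+1)) ≤ 1 / n := by
    have hden : (0:ℝ) < (α+1)^2 * (n:ℝ) ^ (α+1) := by positivity
    have h1 : c / ((α+1)^2 * (n:ℝ) ^ (α+1)) ≤ 1 / ((α+1)^2 * (n:ℝ) ^ (α+1)) := by
      gcongr
    have h2 : (n:ℝ) ≤ (α+1)^2 * (n:ℝ) ^ (α+1) := by nlinarith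
    have h3 : 1 / ((α+1)^2 * (n:ℝ) ^ (α+1)) ≤ 1 / (n:ℝ) :=
      one_div_le_one_div_of_le hN0 h2
    linarith
  have hb2' : 0 ≤ c / ((α+1)^2 * (n:ℝ) ^ (α+1)) := by positivity
  calc |X / (n:ℝ) ^ (α+1) + c / ((α+1)^2 * (n:ℝ) ^ (α+1))|
      ≤ |X / (n:ℝ) ^ (α+1)| + |c / ((α+1)^2 * (n:ℝ) ^ (α+1))| := abs_add_le _ _
    _ ≤ (2 * (Real.log n + 2) * Real.log n + Real.log n) / n + 1 / n := by
        rw [abs_of_nonneg hb2']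
        exact add_le_add hb1 hb2
    _ = (2 * Real.log n ^ 2 + 5 * Real.log n + 1) / n := by
        rw [← add_div]
        congr 1
        ring
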